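/- Let C, E, F, r be as in the resolvent setting and define S_r : E → C by S_r x = {z ∈ C : F(z,y) + (1/r)⟨y − z, Jz − Jx⟩ ≥ 0 for all y ∈ C}. Then S_r is single-valued. -/
import Mathlib


open Set Filter

/-- The resolvent `S_r` is single-valued: for each `x ∈ E` there is at most one
`z ∈ C` with `F(z,y) + (1/r)⟨y − z, Jz − Jx⟩ ≥ 0` for all `y ∈ C`. -/
theorem equilibrium_resolvent_single_valued
    {E : Type*} [NormedAddCommGroup E] [NormedSpace ℝ E] [CompleteSpace E]
    [StrictConvexSpace ℝ E]
    (hrefl : Function.Surjective (NormedSpace.inclusionInDoubleDual ℝ E))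
    (J : E → (E →L[ℝ] ℝ))
    (hJ1 : ∀ x : E, J x x = ‖x‖ ^ 2)
    (hJ2 : ∀ x : E, ‖J x‖ = ‖x‖)
    (C : Set E) (hC : C.Nonempty) (hCc : IsClosed C) (hCv : Convex ℝ C)
    (F : E → E → ℝ)
    (hA1 : ∀ x ∈ C, F x x = 0)
    (hA2 : ∀ x ∈ C, ∀ y ∈ C, F x y + F y x ≤ 0)
    (hA3 : ∀ x ∈ C, ∀ y ∈ C, ∀ z ∈ C,
      Filter.limsup (fun t : ℝ => F (t • z + (1 - t) • x) y) (nhdsWithin 0 (Ioi 0))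
        ≤ F x y)
    (hA4 : ∀ x ∈ C, ConvexOn ℝ C (F x) ∧ LowerSemicontinuousOn (F x) C)
    (r : ℝ) (hr : 0 < r) (x : E) (z₁ z₂ : E)
    (hz₁ : z₁ ∈ C ∧ ∀ y ∈ C, F z₁ y + (1 / r) * ((J z₁ - J x) (y - z₁)) ≥ 0)
    (hz₂ : z₂ ∈ C ∧ ∀ y ∈ C, F z₂ y + (1 / r) * ((J z₂ - J x) (y - z₂)) ≥ 0) :
    z₁ = z₂ := by
  obtain ⟨hm₁, h₁⟩ := hz₁
  obtain ⟨hm₂, h₂⟩ := hz₂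
  have ha := h₁ z₂ hm₂
  have hb := h₂ z₁ hm₁
  have hF := hA2 z₁ hm₁ z₂ hm₂
  -- (J z₁ - J z₂)(z₂ - z₁) ≥ 0
  have hsum : (0:ℝ) ≤ (J z₁ - J x) (z₂ - z₁) + (J z₂ - J x) (z₁ - z₂) := by
    have hrinv : 0 < (1/r) := by positivity
    nlinarith [ha, hb, hF]
  have hkey : (J z₁) z₁ + (J z₂) z₂ ≤ (J z₁) z₂ + (J z₂) z₁ := by
    have := hsum
    simp only [ContinuousLinearMap.sub_apply, map_sub] at this
    linarith
  have hb12 : (J z₁) z₂ ≤ ‖z₁‖ * ‖z₂‖ := by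
    calc (J z₁) z₂ ≤ ‖(J z₁) z₂‖ := le_abs_self _
    _ ≤ ‖J z₁‖ * ‖z₂‖ := (J z₁).le_opNorm z₂
    _ = ‖z₁‖ * ‖z₂‖ := by rw [hJ2]
  have hb21 : (J z₂) z₁ ≤ ‖z₂‖ * ‖z₁‖ := by
    calc (J z₂) z₁ ≤ ‖(J z₂) z₁‖ := le_abs_self _
    _ ≤ ‖J z₂‖ * ‖z₁‖ := (J z₂).le_opNorm z₁
    _ = ‖z₂‖ * ‖z₁‖ := by rw [hJ2]
  have hnorms : ‖z₁‖ = ‖z₂‖ := by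
    have h1 := hJ1 z₁; have h2 := hJ1 z₂
    nlinarith [hkey, hb12, hb21]
  have heq12 : (J z₁) z₂ = ‖z₁‖ ^ 2 := by
    have h1 := hJ1 z₁; have h2 := hJ1 z₂
    nlinarith [hkey, hb12, hb21]
  have hadd : ‖z₁‖ + ‖z₂‖ ≤ ‖z₁ + z₂‖ := by
    rcases eq_or_lt_of_le (norm_nonneg z₁) with h0 | h0
    · rw [← h0, ← hnorms, ← h0]
      simpa using norm_nonneg (z₁ + z₂)
    · have hJz : (J z₁) (z₁ + z₂) = ‖z₁‖ * (‖z₁‖ + ‖z₂‖) := by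
        rw [map_add, hJ1, heq12, ← hnorms]; ring
      have hle : (J z₁) (z₁ + z₂) ≤ ‖z₁‖ * ‖z₁ + z₂‖ := by
        calc (J z₁) (z₁ + z₂) ≤ ‖(J z₁) (z₁ + z₂)‖ := le_abs_self _
        _ ≤ ‖J z₁‖ * ‖z₁ + z₂‖ := (J z₁).le_opNorm _
        _ = ‖z₁‖ * ‖z₁ + z₂‖ := by rw [hJ2]
      rw [hJz] at hle
      exact le_of_mul_le_mul_left hle h0
  exact eq_of_norm_eq_of_norm_add_eq hnorms
    (le_antisymm (norm_add_le _ _) hadd)
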